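/- Let 2 ≤ d ≤ r/2 and let ρ be the remainder of r upon division by 2d. Then β_r(d) ≥ Σ_{i+j=d, 0≤i≤2d−ρ, 0≤j≤ρ} C(2d−ρ, i)·C(ρ, j)·⌊r/(2d)⌋^i·(⌊r/(2d)⌋+1)^j. In particular β_r(d) ≥ C(2d, d)·⌊r/(2d)⌋^d. -/

import Mathlib

namespace BetaAux

open Finset

/-- Encodings: for each of the `2d` blocks, `0` (empty) or `1 + position`. -/
def Dset (r d : ℕ) : Finset (Fin (2*d) → ℕ) :=
  (Fintype.piFinset fun k : Fin (2*d) =>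
      Finset.range ((if (k : ℕ) < r % (2*d) then r/(2*d)+1 else r/(2*d)) + 1)).filter
    fun c => (Finset.univ.filter fun k => c k ≠ 0).card = d

lemma card_filter_lt_rho (d ρ : ℕ) (hρ : ρ ≤ 2*d) :
    ((Finset.univ : Finset (Fin (2*d))).filter fun k => k.val < ρ).card = ρ := by
  conv_rhs => rw [← Finset.card_range ρ]
  refine Finset.card_bij' (fun k _ => (k : ℕ))
    (fun a ha => (⟨a, by simp only [Finset.mem_range] at ha; omega⟩ : Fin (2*d)))
    ?_ ?_ ?_ ?_
  · intro k hk; simp only [Finset.mem_filter] at hk; simp [hk.2]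
  · intro a ha; simp only [Finset.mem_range] at ha; simp [ha]
  · intro k hk; rfl
  · intro a ha; rfl

lemma fiber_card (r d : ℕ) (S : Finset (Fin (2*d)))
    (hS : S ∈ Finset.powersetCard d Finset.univ) :
    ((Dset r d).filter fun c => (Finset.univ.filter fun k => c k ≠ 0) = S).card
      = ∏ k ∈ S, (if (k : ℕ) < r % (2*d) then r/(2*d)+1 else r/(2*d)) := by
  rw [Finset.mem_powersetCard] at hS
  rw [show (∏ k ∈ S, (if (k : ℕ) < r % (2*d) then r/(2*d)+1 else r/(2*d)))
      = (S.pi fun k => Finset.range (if (k : ℕ) < r % (2*d) then r/(2*d)+1 else r/(2*d))).card by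
    rw [Finset.card_pi]; exact Finset.prod_congr rfl fun k _ => (Finset.card_range _).symm]
  refine Finset.card_bij' (fun c _ => fun k _ => c k - 1)
    (fun g _ => fun k => if h : k ∈ S then g k h + 1 else 0) ?_ ?_ ?_ ?_
  · -- i maps into the pi set
    intro c hc
    simp only [Finset.mem_filter, Dset, Fintype.mem_piFinset] at hc
    obtain ⟨⟨hb, _⟩, hsupp⟩ := hc
    rw [Finset.mem_pi]
    intro k hk
    rw [← hsupp] at hk
    simp only [Finset.mem_filter] at hk
    have := hb k
    simp only [Finset.mem_range] at this ⊢
    have hk0 := hk.2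
    omega
  · -- j maps into the fiber
    intro g hg
    rw [Finset.mem_pi] at hg
    have hset : (Finset.univ.filter fun k => (if h : k ∈ S then g k h + 1 else 0) ≠ 0) = S := by
      ext k
      by_cases h : k ∈ S <;> simp [h]
    simp only [Finset.mem_filter, Dset, Fintype.mem_piFinset]
    refine ⟨⟨fun k => ?_, by rw [hset, hS.2]⟩, hset⟩
    by_cases h : k ∈ S
    · simp only [dif_pos h]
      have := hg k h
      simp only [Finset.mem_range] at this ⊢
      omega
    · simp [dif_neg h]
  · -- left inverse
    intro c hc
    simp only [Finset.mem_filter] at hc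
    funext k
    by_cases h : k ∈ S
    · simp only [dif_pos h]
      have hk : k ∈ Finset.univ.filter fun k => c k ≠ 0 := by rw [hc.2]; exact h
      simp only [Finset.mem_filter] at hk
      have := hk.2
      omega
    · simp only [dif_neg h]
      by_contra hne
      have hk : k ∈ Finset.univ.filter fun k => c k ≠ 0 := by
        simp only [Finset.mem_filter]
        exact ⟨Finset.mem_univ _, Ne.symm hne⟩
      rw [hc.2] at hk
      exact h hk
  · -- right inverse
    intro g hg
    funext k hk
    simp [dif_pos hk]

lemma subset_fiber_card (d ρ : ℕ) (hρ : ρ ≤ 2*d) (p1 p2 : ℕ) (hp : p1 + p2 = d) :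
    ((Finset.powersetCard d (Finset.univ : Finset (Fin (2*d)))).filter fun S =>
        (S.filter fun k => ¬ k.val < ρ).card = p1 ∧ (S.filter fun k => k.val < ρ).card = p2).card
      = (2*d - ρ).choose p1 * ρ.choose p2 := by
  have hBIG : ((Finset.univ : Finset (Fin (2*d))).filter fun k => ¬ k.val < ρ).card = 2*d - ρ := by
    have h1 := Finset.card_filter_add_card_filter_not
      (s := (Finset.univ : Finset (Fin (2*d)))) (p := fun k => k.val < ρ)
    rw [card_filter_lt_rho d ρ hρ] at h1
    simp only [Finset.card_univ, Fintype.card_fin] at h1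
    omega
  have key : ((Finset.powersetCard d (Finset.univ : Finset (Fin (2*d)))).filter fun S =>
        (S.filter fun k => ¬ k.val < ρ).card = p1 ∧ (S.filter fun k => k.val < ρ).card = p2).card
      = ((Finset.powersetCard p1 ((Finset.univ : Finset (Fin (2*d))).filter fun k => ¬ k.val < ρ)) ×ˢ
         (Finset.powersetCard p2 ((Finset.univ : Finset (Fin (2*d))).filter fun k => k.val < ρ))).card := by
    refine Finset.card_bij' (fun S _ => (S.filter fun k => ¬ k.val < ρ, S.filter fun k => k.val < ρ))
      (fun P _ => P.1 ∪ P.2) ?_ ?_ ?_ ?_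
    · intro S hS
      simp only [Finset.mem_filter, Finset.mem_powersetCard] at hS
      simp only [Finset.mem_product, Finset.mem_powersetCard]
      refine ⟨⟨fun k hk => ?_, hS.2.1⟩, fun k hk => ?_, hS.2.2⟩
      · simp only [Finset.mem_filter] at hk ⊢; exact ⟨Finset.mem_univ _, hk.2⟩
      · simp only [Finset.mem_filter] at hk ⊢; exact ⟨Finset.mem_univ _, hk.2⟩
    · intro P hP
      simp only [Finset.mem_product, Finset.mem_powersetCard] at hP
      have hd1 : ∀ k ∈ P.1, ¬ k.val < ρ := fun k hk => by
        have := hP.1.1 hk; simp only [Finset.mem_filter] at this; exact this.2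
      have hd2 : ∀ k ∈ P.2, k.val < ρ := fun k hk => by
        have := hP.2.1 hk; simp only [Finset.mem_filter] at this; exact this.2
      have hdisj : Disjoint P.1 P.2 := by
        rw [Finset.disjoint_left]
        intro k h1 h2
        exact hd1 k h1 (hd2 k h2)
      have e1 : (P.1 ∪ P.2).filter (fun k => ¬ k.val < ρ) = P.1 := by
        ext k
        simp only [Finset.mem_filter, Finset.mem_union]
        constructor
        · rintro ⟨h1 | h1, h2⟩
          · exact h1
          · exact absurd (hd2 k h1) h2
        · intro h; exact ⟨Or.inl h, hd1 k h⟩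
      have e2 : (P.1 ∪ P.2).filter (fun k => k.val < ρ) = P.2 := by
        ext k
        simp only [Finset.mem_filter, Finset.mem_union]
        constructor
        · rintro ⟨h1 | h1, h2⟩
          · exact absurd h2 (hd1 k h1)
          · exact h1
        · intro h; exact ⟨Or.inr h, hd2 k h⟩
      simp only [Finset.mem_filter, Finset.mem_powersetCard]
      refine ⟨⟨Finset.subset_univ _, ?_⟩, by rw [e1, hP.1.2], by rw [e2, hP.2.2]⟩
      rw [Finset.card_union_of_disjoint hdisj, hP.1.2, hP.2.2, hp]
    · intro S hS
      show (S.filter fun k => ¬ k.val < ρ) ∪ (S.filter fun k => k.val < ρ) = S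
      rw [Finset.union_comm]
      exact Finset.filter_union_filter_not_eq (p := fun k => k.val < ρ) S
    · intro P hP
      simp only [Finset.mem_product, Finset.mem_powersetCard] at hP
      have hd1 : ∀ k ∈ P.1, ¬ k.val < ρ := fun k hk => by
        have := hP.1.1 hk; simp only [Finset.mem_filter] at this; exact this.2
      have hd2 : ∀ k ∈ P.2, k.val < ρ := fun k hk => by
        have := hP.2.1 hk; simp only [Finset.mem_filter] at this; exact this.2
      have e1 : (P.1 ∪ P.2).filter (fun k => ¬ k.val < ρ) = P.1 := by
        ext k
        simp only [Finset.mem_filter, Finset.mem_union]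
        constructor
        · rintro ⟨h1 | h1, h2⟩
          · exact h1
          · exact absurd (hd2 k h1) h2
        · intro h; exact ⟨Or.inl h, hd1 k h⟩
      have e2 : (P.1 ∪ P.2).filter (fun k => k.val < ρ) = P.2 := by
        ext k
        simp only [Finset.mem_filter, Finset.mem_union]
        constructor
        · rintro ⟨h1 | h1, h2⟩
          · exact absurd h2 (hd1 k h1)
          · exact h1
        · intro h; exact ⟨Or.inr h, hd2 k h⟩
      rw [Prod.ext_iff]
      exact ⟨e1, e2⟩
  rw [key, Finset.card_product, Finset.card_powersetCard, Finset.card_powersetCard,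
    hBIG, card_filter_lt_rho d ρ hρ]

lemma card_Dset (r d : ℕ) (hd : 0 < d) :
    (Dset r d).card = ∑ p ∈ Finset.HasAntidiagonal.antidiagonal d,
        (2 * d - r % (2 * d)).choose p.1 * (r % (2 * d)).choose p.2 *
          (r / (2 * d)) ^ p.1 * (r / (2 * d) + 1) ^ p.2 := by
  have hρ : r % (2*d) ≤ 2*d := le_of_lt (Nat.mod_lt _ (by omega))
  have h1 : (Dset r d).card = ∑ S ∈ Finset.powersetCard d (Finset.univ : Finset (Fin (2*d))),
      ((Dset r d).filter fun c => (Finset.univ.filter fun k => c k ≠ 0) = S).card := by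
    apply Finset.card_eq_sum_card_fiberwise
    intro c hc
    simp only [Finset.mem_coe, Dset, Finset.mem_filter] at hc
    rw [Finset.mem_coe, Finset.mem_powersetCard]
    exact ⟨Finset.subset_univ _, hc.2⟩
  rw [h1]
  have h2 : ∀ S ∈ Finset.powersetCard d (Finset.univ : Finset (Fin (2*d))),
      ((Dset r d).filter fun c => (Finset.univ.filter fun k => c k ≠ 0) = S).card
        = (r/(2*d)+1) ^ (S.filter fun k => k.val < r % (2*d)).card
            * (r/(2*d)) ^ (S.filter fun k => ¬ k.val < r % (2*d)).card := by
    intro S hS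
    rw [fiber_card r d S hS, Finset.prod_ite, Finset.prod_const, Finset.prod_const]
  rw [Finset.sum_congr rfl h2]
  have hmaps : ∀ S ∈ Finset.powersetCard d (Finset.univ : Finset (Fin (2*d))),
      (fun S : Finset (Fin (2*d)) =>
        ((S.filter fun k => ¬ k.val < r % (2*d)).card, (S.filter fun k => k.val < r % (2*d)).card)) S
        ∈ Finset.HasAntidiagonal.antidiagonal d := by
    clear h1 h2
    intro S hS
    rw [Finset.mem_powersetCard] at hS
    have h4 := Finset.card_filter_add_card_filter_not
      (s := S) (p := fun k => k.val < r % (2*d))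
    simp only [Finset.HasAntidiagonal.mem_antidiagonal]
    omega
  have h3 := Finset.sum_fiberwise_of_maps_to hmaps
    (fun S : Finset (Fin (2*d)) =>
      (r/(2*d)+1) ^ (S.filter fun k => k.val < r % (2*d)).card
        * (r/(2*d)) ^ (S.filter fun k => ¬ k.val < r % (2*d)).card)
  rw [← h3]
  apply Finset.sum_congr rfl
  intro p hp
  obtain ⟨p1, p2⟩ := p
  rw [Finset.HasAntidiagonal.mem_antidiagonal] at hp
  have hinner : ∀ S ∈ (Finset.powersetCard d (Finset.univ : Finset (Fin (2*d)))).filter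
      (fun S => ((S.filter fun k => ¬ k.val < r % (2*d)).card,
                 (S.filter fun k => k.val < r % (2*d)).card) = (p1, p2)),
      (r/(2*d)+1) ^ (S.filter fun k => k.val < r % (2*d)).card
          * (r/(2*d)) ^ (S.filter fun k => ¬ k.val < r % (2*d)).card
        = (r/(2*d)+1) ^ p2 * (r/(2*d)) ^ p1 := by
    intro S hS
    simp only [Finset.mem_filter, Prod.mk.injEq] at hS
    rw [hS.2.1, hS.2.2]
  rw [Finset.sum_congr rfl hinner, Finset.sum_const]
  have hfilters : ((Finset.powersetCard d (Finset.univ : Finset (Fin (2*d)))).filter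
      (fun S => ((S.filter fun k => ¬ k.val < r % (2*d)).card,
                 (S.filter fun k => k.val < r % (2*d)).card) = (p1, p2)))
      = ((Finset.powersetCard d (Finset.univ : Finset (Fin (2*d)))).filter fun S =>
        (S.filter fun k => ¬ k.val < r % (2*d)).card = p1 ∧
        (S.filter fun k => k.val < r % (2*d)).card = p2) := by
    apply Finset.filter_congr
    intro S _
    simp [Prod.ext_iff]
  rw [hfilters, subset_fiber_card d (r % (2*d)) hρ p1 p2 hp, smul_eq_mul]
  ring



/-- The vector associated to an encoding: a `1` in block `k` (residue class of
`k` mod `2d`) at position `c k - 1`, whenever `c k ≠ 0`. -/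
def Phi (r d : ℕ) (hd : 0 < d) (c : Fin (2*d) → ℕ) : Fin r → ZMod 2 :=
  fun i => if c ⟨i.val % (2*d), Nat.mod_lt _ (by omega)⟩ = i.val / (2*d) + 1 then 1 else 0

lemma phi_zero_or_one (r d : ℕ) (hd : 0 < d) (c : Fin (2*d) → ℕ) (i : Fin r) :
    Phi r d hd c i = 0 ∨ Phi r d hd c i = 1 := by
  unfold Phi; split
  · right; rfl
  · left; rfl

lemma phi_eq_one_iff (r d : ℕ) (hd : 0 < d) (c : Fin (2*d) → ℕ) (i : Fin r) :
    Phi r d hd c i = 1 ↔ c ⟨i.val % (2*d), Nat.mod_lt _ (by omega)⟩ = i.val / (2*d) + 1 := by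
  unfold Phi; split
  · simp_all
  · simp_all

lemma phi_perblock (r d : ℕ) (hd : 0 < d) (c : Fin (2*d) → ℕ) {i j : Fin r}
    (hi : Phi r d hd c i = 1) (hj : Phi r d hd c j = 1)
    (hij : i.val % (2*d) = j.val % (2*d)) : i = j := by
  rw [phi_eq_one_iff] at hi hj
  have hidx : (⟨i.val % (2*d), Nat.mod_lt _ (by omega)⟩ : Fin (2*d))
      = ⟨j.val % (2*d), Nat.mod_lt _ (by omega)⟩ := Fin.ext hij
  rw [hidx] at hi
  have hdiv : i.val / (2*d) = j.val / (2*d) := by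
    have h := hi.symm.trans hj
    omega
  apply Fin.ext
  calc i.val = 2*d*(i.val/(2*d)) + i.val%(2*d) := (Nat.div_add_mod _ _).symm
    _ = 2*d*(j.val/(2*d)) + j.val%(2*d) := by rw [hdiv, hij]
    _ = j.val := Nat.div_add_mod _ _

lemma mem_Dset_bound (r d : ℕ) {c : Fin (2*d) → ℕ} (hc : c ∈ Dset r d) (k : Fin (2*d)) :
    c k < (if (k : ℕ) < r % (2*d) then r/(2*d)+1 else r/(2*d)) + 1 := by
  simp only [Dset, Finset.mem_filter, Fintype.mem_piFinset] at hc
  have := hc.1 k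
  simpa [Finset.mem_range] using this

lemma mem_Dset_card (r d : ℕ) {c : Fin (2*d) → ℕ} (hc : c ∈ Dset r d) :
    (Finset.univ.filter fun k => c k ≠ 0).card = d := by
  simp only [Dset, Finset.mem_filter] at hc
  exact hc.2

lemma exists_coord (r d : ℕ) (hd : 0 < d) (hdr : 2*d ≤ r) {c : Fin (2*d) → ℕ}
    (hc : c ∈ Dset r d) {k : Fin (2*d)} (hk : c k ≠ 0) :
    ∃ i : Fin r, i.val % (2*d) = k.val ∧ Phi r d hd c i = 1 := by
  have hb := mem_Dset_bound r d hc k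
  have hdm := Nat.div_add_mod r (2*d)
  have hkd : k.val < 2*d := k.isLt
  have hρ : r % (2*d) < 2*d := Nat.mod_lt _ (by omega)
  have hlt : 2*d * (c k - 1) + k.val < r := by
    by_cases hsm : (k : ℕ) < r % (2*d)
    · rw [if_pos hsm] at hb
      have : c k - 1 ≤ r / (2*d) := by omega
      have h5 : 2*d * (c k - 1) ≤ 2*d * (r / (2*d)) := Nat.mul_le_mul_left _ this
      omega
    · rw [if_neg hsm] at hb
      have hm1 : 1 ≤ r / (2*d) := by omega
      have h5 : 2*d * (c k - 1) ≤ 2*d * (r / (2*d) - 1) := Nat.mul_le_mul_left _ (by omega)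
      have h6 : 2*d * (r / (2*d) - 1 + 1) = 2*d * (r / (2*d)) := by rw [Nat.sub_add_cancel hm1]
      have h7 : 2*d * (r / (2*d) - 1 + 1) = 2*d * (r / (2*d) - 1) + 2*d := by
        rw [Nat.mul_add, Nat.mul_one]
      omega
  refine ⟨⟨2*d * (c k - 1) + k.val, hlt⟩, ?_, ?_⟩
  · show (2*d * (c k - 1) + k.val) % (2*d) = k.val
    rw [Nat.mul_add_mod]
    exact Nat.mod_eq_of_lt hkd
  · rw [phi_eq_one_iff]
    have hmod : (2*d * (c k - 1) + k.val) % (2*d) = k.val := by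
      rw [Nat.mul_add_mod]; exact Nat.mod_eq_of_lt hkd
    have hdiv : (2*d * (c k - 1) + k.val) / (2*d) = c k - 1 := by
      rw [Nat.mul_add_div (by omega)]
      rw [Nat.div_eq_of_lt hkd, Nat.add_zero]
    have hidx : (⟨(2*d * (c k - 1) + k.val) % (2*d), Nat.mod_lt _ (by omega)⟩ : Fin (2*d)) = k :=
      Fin.ext hmod
    rw [hidx]
    show c k = (2*d * (c k - 1) + k.val) / (2*d) + 1
    rw [hdiv]
    omega

lemma card_supp_phi (r d : ℕ) (hd : 0 < d) (hdr : 2*d ≤ r) {c : Fin (2*d) → ℕ}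
    (hc : c ∈ Dset r d) :
    (Finset.univ.filter fun i => Phi r d hd c i = 1).card = d := by
  conv_rhs => rw [← mem_Dset_card r d hc]
  apply Finset.card_bij (i := fun i _ => (⟨i.val % (2*d), Nat.mod_lt _ (by omega)⟩ : Fin (2*d)))
  · intro i hi
    simp only [Finset.mem_filter] at hi ⊢
    refine ⟨Finset.mem_univ _, ?_⟩
    rw [phi_eq_one_iff] at hi
    rw [hi.2]
    exact Nat.succ_ne_zero _
  · intro i hi j hj hij
    simp only [Finset.mem_filter] at hi hj
    exact phi_perblock r d hd c hi.2 hj.2 (congrArg Fin.val hij)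
  · intro k hk
    simp only [Finset.mem_filter] at hk
    obtain ⟨i, hi1, hi2⟩ := exists_coord r d hd hdr hc hk.2
    refine ⟨i, by simp only [Finset.mem_filter]; exact ⟨Finset.mem_univ _, hi2⟩, Fin.ext hi1⟩

lemma phi_injOn (r d : ℕ) (hd : 0 < d) (hdr : 2*d ≤ r) :
    Set.InjOn (Phi r d hd) (Dset r d) := by
  have key : ∀ c c', c ∈ Dset r d → c' ∈ Dset r d → Phi r d hd c = Phi r d hd c' →
      ∀ k, c k ≠ 0 → c' k = c k := by
    intro c c' hc hc' h k hk
    obtain ⟨i, hi1, hi2⟩ := exists_coord r d hd hdr hc hk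
    have hi2' : Phi r d hd c' i = 1 := by rw [← h]; exact hi2
    rw [phi_eq_one_iff] at hi2 hi2'
    have hidx : (⟨i.val % (2*d), Nat.mod_lt _ (by omega)⟩ : Fin (2*d)) = k := Fin.ext hi1
    rw [hidx] at hi2 hi2'
    rw [hi2', hi2]
  intro c hc c' hc' h
  funext k
  by_cases h1 : c k = 0
  · by_cases h2 : c' k = 0
    · rw [h1, h2]
    · have := key c' c hc' hc h.symm k h2
      omega
  · exact (key c c' hc hc' h k h1).symm

/-- block sum functional -/
def sigmaB (r d : ℕ) (k : Fin (2*d)) (y : Fin r → ZMod 2) : ZMod 2 :=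
  ∑ i ∈ Finset.univ.filter (fun i : Fin r => i.val % (2*d) = k.val), y i

lemma sigmaB_add (r d : ℕ) (k : Fin (2*d)) (y z : Fin r → ZMod 2) :
    sigmaB r d k (y + z) = sigmaB r d k y + sigmaB r d k z := by
  unfold sigmaB
  rw [← Finset.sum_add_distrib]
  rfl

lemma sigmaB_phi (r d : ℕ) (hd : 0 < d) (hdr : 2*d ≤ r) {c : Fin (2*d) → ℕ}
    (hc : c ∈ Dset r d) (k : Fin (2*d)) :
    sigmaB r d k (Phi r d hd c) = if c k = 0 then 0 else 1 := by
  by_cases h : c k = 0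
  · rw [if_pos h]
    apply Finset.sum_eq_zero
    intro i hi
    simp only [Finset.mem_filter] at hi
    have hidx : (⟨i.val % (2*d), Nat.mod_lt _ (by omega)⟩ : Fin (2*d)) = k := Fin.ext hi.2
    rcases phi_zero_or_one r d hd c i with h0 | h1
    · exact h0
    · exfalso
      rw [phi_eq_one_iff, hidx, h] at h1
      exact Nat.succ_ne_zero _ h1.symm
  · rw [if_neg h]
    obtain ⟨i₀, hi₀1, hi₀2⟩ := exists_coord r d hd hdr hc h
    unfold sigmaB
    rw [Finset.sum_eq_single i₀]
    · exact hi₀2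
    · intro b hb hbne
      simp only [Finset.mem_filter] at hb
      rcases phi_zero_or_one r d hd c b with h0 | h1
      · exact h0
      · exact absurd (phi_perblock r d hd c h1 hi₀2 (by rw [hb.2, hi₀1])) hbne
    · intro habs
      exfalso
      exact habs (by simp only [Finset.mem_filter]; exact ⟨Finset.mem_univ _, hi₀1⟩)

lemma sigmaB_indicator (r d : ℕ) (v : Fin r → ZMod 2)
    (hv : ∀ i j : Fin r, v i = 1 → v j = 1 → i.val % (2*d) = j.val % (2*d) → i = j)
    (k : Fin (2*d)) :
    sigmaB r d k v = if ∃ i : Fin r, i.val % (2*d) = k.val ∧ v i = 1 then 1 else 0 := by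
  have hpt : ∀ a : ZMod 2, a = if a = 1 then 1 else 0 := by decide
  unfold sigmaB
  rw [Finset.sum_congr rfl (fun i _ => hpt (v i)), Finset.sum_boole]
  by_cases hex : ∃ i : Fin r, i.val % (2*d) = k.val ∧ v i = 1
  · rw [if_pos hex]
    obtain ⟨i₀, hi₀1, hi₀2⟩ := hex
    have : ((Finset.univ.filter (fun i : Fin r => i.val % (2*d) = k.val)).filter fun i => v i = 1)
        = {i₀} := by
      ext b
      simp only [Finset.mem_filter, Finset.mem_singleton]
      constructor
      · rintro ⟨⟨-, hb1⟩, hb2⟩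
        exact hv b i₀ hb2 hi₀2 (by rw [hb1, hi₀1])
      · rintro rfl
        exact ⟨⟨Finset.mem_univ _, hi₀1⟩, hi₀2⟩
    rw [this, Finset.card_singleton, Nat.cast_one]
  · rw [if_neg hex]
    have : ((Finset.univ.filter (fun i : Fin r => i.val % (2*d) = k.val)).filter fun i => v i = 1)
        = ∅ := by
      ext b
      simp only [Finset.mem_filter, Finset.notMem_empty, iff_false, not_and]
      rintro ⟨-, hb1⟩ hb2
      exact hex ⟨b, hb1, hb2⟩
    rw [this, Finset.card_empty, Nat.cast_zero]

lemma finrank_ker (r d : ℕ) (hdr : d ≤ r) (M : Matrix (Fin d) (Fin r) (ZMod 2))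
    (e : Fin d → Fin r) (he : ∀ a b, M a (e b) = if a = b then 1 else 0) :
    Module.finrank (ZMod 2) (LinearMap.ker M.mulVecLin) = r - d := by
  have hsurj : Function.Surjective M.mulVecLin := by
    intro w
    refine ⟨fun j => ∑ b, if j = e b then w b else 0, ?_⟩
    funext a
    simp only [Matrix.mulVecLin_apply, Matrix.mulVec, dotProduct]
    calc ∑ j, M a j * ∑ b, (if j = e b then w b else 0)
        = ∑ j, ∑ b, M a j * (if j = e b then w b else 0) := by
          exact Finset.sum_congr rfl fun j _ => Finset.mul_sum _ _ _
      _ = ∑ b, ∑ j, M a j * (if j = e b then w b else 0) := Finset.sum_comm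
      _ = ∑ b, M a (e b) * w b := by
          refine Finset.sum_congr rfl fun b _ => ?_
          rw [Finset.sum_eq_single (e b)]
          · rw [if_pos rfl]
          · intro j _ hj; rw [if_neg hj, mul_zero]
          · intro h; exact absurd (Finset.mem_univ _) h
      _ = ∑ b, (if a = b then 1 else 0) * w b := by
          refine Finset.sum_congr rfl fun b _ => by rw [he]
      _ = w a := by
          simp [ite_mul, one_mul, zero_mul, Finset.sum_ite_eq]
  have h1 := LinearMap.finrank_range_add_finrank_ker M.mulVecLin
  rw [LinearMap.range_eq_top.mpr hsurj, finrank_top] at h1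
  rw [Module.finrank_pi, Module.finrank_pi, Fintype.card_fin, Fintype.card_fin] at h1
  omega

lemma mem_ker_iff (r d : ℕ) (M : Matrix (Fin d) (Fin r) (ZMod 2)) (x : Fin r → ZMod 2) :
    x ∈ LinearMap.ker M.mulVecLin ↔ ∀ a, ∑ j, M a j * x j = 0 := by
  rw [LinearMap.mem_ker]
  constructor
  · intro h a
    have := congrFun h a
    simpa [Matrix.mulVecLin_apply, Matrix.mulVec, dotProduct] using this
  · intro h
    funext a
    simpa [Matrix.mulVecLin_apply, Matrix.mulVec, dotProduct] using h a

end BetaAux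

namespace BetaAux

lemma pin_ker (r d : ℕ) (hdr : d ≤ r) (q : Fin d → Fin r) (hq : Function.Injective q) :
    ∃ L : Submodule (ZMod 2) (Fin r → ZMod 2), Module.finrank (ZMod 2) L = r - d ∧
      ∀ x ∈ L, ∀ a, x (q a) = 0 := by
  set M : Matrix (Fin d) (Fin r) (ZMod 2) := fun a j => if j = q a then 1 else 0 with hM
  have he : ∀ a b, M a (q b) = if a = b then (1 : ZMod 2) else 0 := by
    intro a b
    by_cases hab : a = b
    · subst hab; rw [hM]; simp
    · show (if q b = q a then (1:ZMod 2) else 0) = _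
      rw [if_neg (fun h => hab (hq h).symm), if_neg hab]
  refine ⟨LinearMap.ker M.mulVecLin, finrank_ker r d hdr M q he, ?_⟩
  intro x hx a
  have h := (mem_ker_iff r d M x).1 hx a
  have hpt : ∀ j : Fin r, M a j * x j = if j = q a then x j else 0 := by
    intro j; by_cases hj : j = q a <;> simp [hM, hj]
  rw [Finset.sum_congr rfl fun j _ => hpt j, Finset.sum_ite_eq', if_pos (Finset.mem_univ _)] at h
  exact h

lemma star_ker (r d : ℕ) (hd : 0 < d) (hdr : 2*d ≤ r) (k0 : Fin (2*d)) (kf : Fin d → Fin (2*d))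
    (hkf_ne : ∀ a, kf a ≠ k0) (hkf_inj : Function.Injective kf) :
    ∃ L : Submodule (ZMod 2) (Fin r → ZMod 2), Module.finrank (ZMod 2) L = r - d ∧
      ∀ x ∈ L, ∀ a, sigmaB r d k0 x + sigmaB r d (kf a) x = 0 := by
  set M : Matrix (Fin d) (Fin r) (ZMod 2) := fun a j =>
    if j.val % (2*d) = k0.val ∨ j.val % (2*d) = (kf a).val then 1 else 0 with hM
  set e : Fin d → Fin r := fun b => ⟨(kf b).val, lt_of_lt_of_le (kf b).isLt hdr⟩ with hedef
  have he : ∀ a b, M a (e b) = if a = b then (1 : ZMod 2) else 0 := by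
    intro a b
    have hmod : (kf b).val % (2*d) = (kf b).val := Nat.mod_eq_of_lt (kf b).isLt
    show (if (kf b).val % (2*d) = k0.val ∨ (kf b).val % (2*d) = (kf a).val then (1:ZMod 2) else 0) = _
    rw [hmod]
    by_cases hab : a = b
    · subst hab
      rw [if_pos (Or.inr rfl), if_pos rfl]
    · rw [if_neg, if_neg hab]
      rintro (h | h)
      · exact hkf_ne b (Fin.ext h)
      · exact hab (hkf_inj (Fin.ext h)).symm
  refine ⟨LinearMap.ker M.mulVecLin, finrank_ker r d (by omega) M e he, ?_⟩
  intro x hx a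
  have h := (mem_ker_iff r d M x).1 hx a
  have h2 : ∑ j ∈ Finset.univ.filter
      (fun j : Fin r => j.val % (2*d) = k0.val ∨ j.val % (2*d) = (kf a).val), x j = 0 := by
    rw [Finset.sum_filter]
    have hcong : (∑ j : Fin r,
        if (j.val % (2*d) = k0.val ∨ j.val % (2*d) = (kf a).val) then x j else 0)
        = ∑ j : Fin r, M a j * x j := by
      refine Finset.sum_congr rfl fun j _ => ?_
      by_cases hP : (j.val % (2*d) = k0.val ∨ j.val % (2*d) = (kf a).val)
      · rw [if_pos hP, show M a j = 1 by rw [hM]; exact if_pos hP, one_mul]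
      · rw [if_neg hP, show M a j = 0 by rw [hM]; exact if_neg hP, zero_mul]
    rw [hcong]
    exact h
  have hdisj : Disjoint (Finset.univ.filter (fun j : Fin r => j.val % (2*d) = k0.val))
      (Finset.univ.filter (fun j : Fin r => j.val % (2*d) = (kf a).val)) := by
    rw [Finset.disjoint_left]
    intro j h1 h2
    simp only [Finset.mem_filter] at h1 h2
    exact hkf_ne a (Fin.ext (h1.2.symm.trans h2.2)).symm
  rw [Finset.filter_or, Finset.sum_union hdisj] at h2
  exact h2

lemma exists_pins_two (r d : ℕ) (hd : 2 ≤ d) (hdr : 2*d ≤ r) (i1 i2 : Fin r) (hne : i1 ≠ i2) :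
    ∃ q : Fin d → Fin r, Function.Injective q ∧
      q ⟨0, by omega⟩ = i1 ∧ q ⟨1, by omega⟩ = i2 := by
  have hr4 : 4 ≤ r := by omega
  let z0 : Fin r := ⟨0, by omega⟩
  let z1 : Fin r := ⟨1, by omega⟩
  have hz : z0 ≠ z1 := by simp [z0, z1, Fin.ext_iff]
  let s1 := Equiv.swap z0 i1
  let a := s1.symm i2
  have ha0 : z0 ≠ a := by
    intro h
    apply hne
    have h2 : s1 z0 = i2 := by rw [h]; exact s1.apply_symm_apply i2
    rw [Equiv.swap_apply_left] at h2
    exact h2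
  let s2 := Equiv.swap z1 a
  refine ⟨fun t => s1 (s2 (Fin.castLE (by omega) t)), ?_, ?_, ?_⟩
  · intro t t' h
    have h2 := s2.injective (s1.injective h)
    exact Fin.ext (by simpa using congrArg Fin.val h2)
  · show s1 (s2 z0) = i1
    rw [show s2 z0 = z0 from Equiv.swap_apply_of_ne_of_ne hz ha0]
    exact Equiv.swap_apply_left _ _
  · show s1 (s2 z1) = i2
    rw [show s2 z1 = a from Equiv.swap_apply_left _ _]
    exact s1.apply_symm_apply i2

lemma nonblocking (r d : ℕ) (hd : 2 ≤ d) (hdr : 2*d ≤ r) (hd0 : 0 < d)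
    (v : Fin r → ZMod 2) :
    ∃ L : Submodule (ZMod 2) (Fin r → ZMod 2),
      Module.finrank (ZMod 2) L = r - d ∧
      ∀ x ∈ L, x ≠ 0 → v + x ∉ (Dset r d).image (Phi r d hd0) := by
  by_cases hcase1 : ∃ i j : Fin r, i ≠ j ∧ i.val % (2*d) = j.val % (2*d) ∧ v i = 1 ∧ v j = 1
  · obtain ⟨i1, i2, hne, hblk, hv1, hv2⟩ := hcase1
    obtain ⟨q, hq, hq0, hq1⟩ := exists_pins_two r d hd hdr i1 i2 hne
    obtain ⟨L, hL, hLpin⟩ := pin_ker r d (by omega) q hq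
    refine ⟨L, hL, ?_⟩
    intro x hx hx0 hmem
    simp only [Finset.mem_image] at hmem
    obtain ⟨c, hc, hPhi⟩ := hmem
    have hb1 : Phi r d hd0 c i1 = 1 := by
      rw [hPhi]
      show v i1 + x i1 = 1
      have h := hLpin x hx ⟨0, by omega⟩
      rw [hq0] at h
      rw [h, add_zero, hv1]
    have hb2 : Phi r d hd0 c i2 = 1 := by
      rw [hPhi]
      show v i2 + x i2 = 1
      have h := hLpin x hx ⟨1, by omega⟩
      rw [hq1] at h
      rw [h, add_zero, hv2]
    exact hne (phi_perblock r d hd0 c hb1 hb2 hblk)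
  · have hv : ∀ i j : Fin r, v i = 1 → v j = 1 → i.val % (2*d) = j.val % (2*d) → i = j := by
      intro i j hi hj hij
      by_contra hne
      exact hcase1 ⟨i, j, hne, hij, hi, hj⟩
    by_cases hs : (Finset.univ.filter fun k : Fin (2*d) =>
        ∃ i : Fin r, i.val % (2*d) = k.val ∧ v i = 1).card = d
    · -- v is itself of the same shape : pin its support
      have hsupp_card : (Finset.univ.filter fun i : Fin r => v i = 1).card = d := by
        rw [← hs]
        apply Finset.card_bij
          (i := fun i _ => (⟨i.val % (2*d), Nat.mod_lt _ (by omega)⟩ : Fin (2*d)))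
        · intro i hi
          simp only [Finset.mem_filter] at hi ⊢
          exact ⟨Finset.mem_univ _, ⟨i, rfl, hi.2⟩⟩
        · intro i hi j hj hij
          simp only [Finset.mem_filter] at hi hj
          exact hv i j hi.2 hj.2 (congrArg Fin.val hij)
        · intro k hk
          simp only [Finset.mem_filter] at hk
          obtain ⟨i, hi1, hi2⟩ := hk.2
          exact ⟨i, by simp only [Finset.mem_filter]; exact ⟨Finset.mem_univ _, hi2⟩, Fin.ext hi1⟩
      set eqv := Finset.equivFinOfCardEq hsupp_card with heqv
      set q : Fin d → Fin r := fun a => ((eqv.symm a : _) : Fin r) with hqdef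
      have hq : Function.Injective q := by
        intro a b h
        have := eqv.symm.injective (Subtype.ext h)
        exact this
      have hqv : ∀ a, v (q a) = 1 := by
        intro a
        have h2 := (eqv.symm a).2
        simp only [Finset.mem_filter] at h2
        exact h2.2
      have hq_surj : ∀ i : Fin r, v i = 1 → ∃ a, q a = i := by
        intro i hi
        have hmem : i ∈ Finset.univ.filter fun i : Fin r => v i = 1 := by
          simp only [Finset.mem_filter]; exact ⟨Finset.mem_univ _, hi⟩
        exact ⟨eqv ⟨i, hmem⟩, by rw [hqdef]; simp⟩
      obtain ⟨L, hL, hLpin⟩ := pin_ker r d (by omega) q hq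
      refine ⟨L, hL, ?_⟩
      intro x hx hx0 hmem
      simp only [Finset.mem_image] at hmem
      obtain ⟨c, hc, hPhi⟩ := hmem
      have hbq : ∀ a, Phi r d hd0 c (q a) = 1 := by
        intro a
        rw [hPhi]
        show v (q a) + x (q a) = 1
        rw [hLpin x hx a, add_zero, hqv a]
      have hsub : (Finset.univ.filter fun i : Fin r => v i = 1)
          ⊆ (Finset.univ.filter fun i : Fin r => Phi r d hd0 c i = 1) := by
        intro i hi
        simp only [Finset.mem_filter] at hi ⊢
        obtain ⟨a, ha⟩ := hq_surj i hi.2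
        exact ⟨Finset.mem_univ _, ha ▸ hbq a⟩
      have heq := Finset.eq_of_subset_of_card_le hsub
        (by rw [card_supp_phi r d hd0 hdr hc, hsupp_card])
      have hbv : Phi r d hd0 c = v := by
        funext i
        have hvz : ∀ b : ZMod 2, b = 0 ∨ b = 1 := by decide
        rcases hvz (v i) with h0 | h1
        · rw [h0]
          rcases phi_zero_or_one r d hd0 c i with hp0 | hp1
          · exact hp0
          · exfalso
            have : i ∈ Finset.univ.filter fun i : Fin r => Phi r d hd0 c i = 1 := by
              simp only [Finset.mem_filter]; exact ⟨Finset.mem_univ _, hp1⟩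
            rw [← heq] at this
            simp only [Finset.mem_filter] at this
            rw [this.2] at h0
            exact absurd h0 (by decide)
        · rw [h1]
          have : i ∈ Finset.univ.filter fun i : Fin r => Phi r d hd0 c i = 1 := by
            apply hsub
            simp only [Finset.mem_filter]; exact ⟨Finset.mem_univ _, h1⟩
          simp only [Finset.mem_filter] at this
          exact this.2
      have hxz : x = 0 := by
        have h := hPhi.symm.trans hbv
        exact add_eq_left.mp h
      exact hx0 hxz
    · -- unbalanced case : star conditions on d+1 blocks of constant parity
      set OCC := Finset.univ.filter (fun k : Fin (2*d) =>
        ∃ i : Fin r, i.val % (2*d) = k.val ∧ v i = 1) with hOCCdef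
      have hT : ∃ T : Finset (Fin (2*d)), T.card = d + 1 ∧
          ((∀ k ∈ T, k ∈ OCC) ∨ (∀ k ∈ T, k ∉ OCC)) := by
        by_cases hbig : d + 1 ≤ OCC.card
        · obtain ⟨T, hTsub, hTcard⟩ := Finset.exists_subset_card_eq hbig
          exact ⟨T, hTcard, Or.inl fun k hk => hTsub hk⟩
        · have hcompl : OCCᶜ.card = 2*d - OCC.card := by
            rw [Finset.card_compl]
            simp [Fintype.card_fin]
          have hle : d + 1 ≤ OCCᶜ.card := by omega
          obtain ⟨T, hTsub, hTcard⟩ := Finset.exists_subset_card_eq hle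
          exact ⟨T, hTcard, Or.inr fun k hk => Finset.mem_compl.1 (hTsub hk)⟩
      obtain ⟨T, hTcard, hTclass⟩ := hT
      have hTne : T.Nonempty := Finset.card_pos.1 (by omega)
      obtain ⟨k0, hk0T⟩ := hTne
      have hTe : (T.erase k0).card = d := by
        rw [Finset.card_erase_of_mem hk0T, hTcard]
        omega
      set eqvT := Finset.equivFinOfCardEq hTe with heqvT
      set kf : Fin d → Fin (2*d) := fun a => ((eqvT.symm a : _) : Fin (2*d)) with hkfdef
      have hkfm : ∀ a, kf a ∈ T.erase k0 := fun a => (eqvT.symm a).2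
      have hkf_ne : ∀ a, kf a ≠ k0 := fun a => (Finset.mem_erase.1 (hkfm a)).1
      have hkf_inj : Function.Injective kf := by
        intro a b h
        exact eqvT.symm.injective (Subtype.ext h)
      have hkf_surj : ∀ k ∈ T.erase k0, ∃ a, kf a = k := by
        intro k hk
        exact ⟨eqvT ⟨k, hk⟩, by rw [hkfdef]; simp⟩
      obtain ⟨L, hL, hLstar⟩ := star_ker r d hd0 hdr k0 kf hkf_ne hkf_inj
      refine ⟨L, hL, ?_⟩
      intro x hx hx0 hmem
      simp only [Finset.mem_image] at hmem
      obtain ⟨c, hc, hPhi⟩ := hmem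
      have hiff : ∀ a, (c k0 = 0 ↔ c (kf a) = 0) := by
        intro a
        have h1 := hLstar x hx a
        have h2 : ∀ k, sigmaB r d k (Phi r d hd0 c) = sigmaB r d k v + sigmaB r d k x := by
          intro k; rw [hPhi, sigmaB_add]
        have hval : sigmaB r d k0 v = sigmaB r d (kf a) v := by
          have hk0v := sigmaB_indicator r d v hv k0
          have hkav := sigmaB_indicator r d v hv (kf a)
          have hkaT : kf a ∈ T := (Finset.mem_erase.1 (hkfm a)).2
          rcases hTclass with hcl | hcl
          · rw [hk0v, hkav, if_pos, if_pos]
            · have := hcl _ hkaT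
              rw [hOCCdef] at this
              simp only [Finset.mem_filter] at this
              exact this.2
            · have := hcl _ hk0T
              rw [hOCCdef] at this
              simp only [Finset.mem_filter] at this
              exact this.2
          · rw [hk0v, hkav, if_neg, if_neg]
            · intro hex
              exact hcl _ hkaT (by rw [hOCCdef]; simp only [Finset.mem_filter]
                                   exact ⟨Finset.mem_univ _, hex⟩)
            · intro hex
              exact hcl _ hk0T (by rw [hOCCdef]; simp only [Finset.mem_filter]
                                   exact ⟨Finset.mem_univ _, hex⟩)
        have hself : ∀ b : ZMod 2, b + b = 0 := by decide
        have h4 : sigmaB r d k0 (Phi r d hd0 c) + sigmaB r d (kf a) (Phi r d hd0 c) = 0 := by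
          rw [h2 k0, h2 (kf a), add_add_add_comm, h1, add_zero, hval, hself]
        rw [sigmaB_phi r d hd0 hdr hc k0, sigmaB_phi r d hd0 hdr hc (kf a)] at h4
        constructor
        · intro h5
          by_contra h6
          rw [if_pos h5, if_neg h6] at h4
          exact absurd h4 (by decide)
        · intro h6
          by_contra h5
          rw [if_neg h5, if_pos h6] at h4
          exact absurd h4 (by decide)
      have hO : (Finset.univ.filter fun k => c k ≠ 0).card = d := mem_Dset_card r d hc
      by_cases hck0 : c k0 = 0
      · have hdisj : Disjoint (Finset.univ.filter fun k => c k ≠ 0) T := by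
          rw [Finset.disjoint_left]
          intro k hkO hkT
          simp only [Finset.mem_filter] at hkO
          by_cases hkk0 : k = k0
          · exact hkO.2 (hkk0 ▸ hck0)
          · obtain ⟨a, ha⟩ := hkf_surj k (Finset.mem_erase.2 ⟨hkk0, hkT⟩)
            exact hkO.2 (ha ▸ ((hiff a).1 hck0))
        have hun := Finset.card_union_of_disjoint hdisj
        have hle := Finset.card_le_univ ((Finset.univ.filter fun k => c k ≠ 0) ∪ T)
        rw [hun] at hle
        simp only [Fintype.card_fin] at hle
        omega
      · have hTsubO : T ⊆ Finset.univ.filter fun k => c k ≠ 0 := by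
          intro k hkT
          simp only [Finset.mem_filter]
          refine ⟨Finset.mem_univ _, ?_⟩
          by_cases hkk0 : k = k0
          · exact hkk0 ▸ hck0
          · obtain ⟨a, ha⟩ := hkf_surj k (Finset.mem_erase.2 ⟨hkk0, hkT⟩)
            intro h0
            exact hck0 ((hiff a).2 (ha ▸ h0))
        have hcard := Finset.card_le_card hTsubO
        omega

end BetaAux

/-- A subset `C` of `F_2^r` is `d`-complete if through every point `v` there is a
`d`-flat contained in `C ∪ {v}`; i.e. there is a `d`-dimensional subspace `L`
with `v + (L \ {0}) ⊆ C`. -/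
def KakeyaComplete (r d : ℕ) (C : Set (Fin r → ZMod 2)) : Prop :=
  ∀ v : Fin r → ZMod 2, ∃ L : Submodule (ZMod 2) (Fin r → ZMod 2),
    Module.finrank (ZMod 2) L = d ∧ ∀ x ∈ L, x ≠ 0 → v + x ∈ C

/-- `gamma r d` is the smallest size of a `d`-complete subset of `F_2^r`. -/
noncomputable def gamma (r d : ℕ) : ℕ :=
  sInf {n | ∃ C : Finset (Fin r → ZMod 2), C.card = n ∧ KakeyaComplete r d ↑C}

/-- A subset `B` of `F_2^r` is `d`-non-blocking if for every `v` there is a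
subspace `L` of dimension `r - d` (codimension `d`) with `(v + (L \ {0})) ∩ B = ∅`. -/
def KakeyaNonBlocking (r d : ℕ) (B : Set (Fin r → ZMod 2)) : Prop :=
  ∀ v : Fin r → ZMod 2, ∃ L : Submodule (ZMod 2) (Fin r → ZMod 2),
    Module.finrank (ZMod 2) L = r - d ∧ ∀ x ∈ L, x ≠ 0 → v + x ∉ B

/-- `beta r d` is the largest size of a `d`-non-blocking subset of `F_2^r`. -/
noncomputable def beta (r d : ℕ) : ℕ :=
  sSup {n | ∃ B : Finset (Fin r → ZMod 2), B.card = n ∧ KakeyaNonBlocking r d ↑B}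

theorem beta_lower (r d : ℕ) (hd : 2 ≤ d) (hdr : 2 * d ≤ r) :
    (∑ p ∈ Finset.HasAntidiagonal.antidiagonal d,
        (2 * d - r % (2 * d)).choose p.1 * (r % (2 * d)).choose p.2 *
          (r / (2 * d)) ^ p.1 * (r / (2 * d) + 1) ^ p.2) ≤ beta r d ∧
    (2 * d).choose d * (r / (2 * d)) ^ d ≤ beta r d := by
  have hd0 : 0 < d := by omega
  set Bf := (BetaAux.Dset r d).image (BetaAux.Phi r d hd0) with hBf
  have hcard : Bf.card = ∑ p ∈ Finset.HasAntidiagonal.antidiagonal d,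
      (2 * d - r % (2 * d)).choose p.1 * (r % (2 * d)).choose p.2 *
        (r / (2 * d)) ^ p.1 * (r / (2 * d) + 1) ^ p.2 := by
    rw [hBf, Finset.card_image_of_injOn (BetaAux.phi_injOn r d hd0 hdr)]
    exact BetaAux.card_Dset r d hd0
  have hnb : KakeyaNonBlocking r d ↑Bf := by
    intro v
    obtain ⟨L, h1, h2⟩ := BetaAux.nonblocking r d hd hdr hd0 v
    refine ⟨L, h1, fun x hx hx0 hmem => ?_⟩
    exact h2 x hx hx0 (Finset.mem_coe.1 hmem)
  have hmem : Bf.card ∈ {n | ∃ B : Finset (Fin r → ZMod 2),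
      B.card = n ∧ KakeyaNonBlocking r d ↑B} := ⟨Bf, rfl, hnb⟩
  have hbdd : BddAbove {n | ∃ B : Finset (Fin r → ZMod 2),
      B.card = n ∧ KakeyaNonBlocking r d ↑B} := by
    refine ⟨Fintype.card (Fin r → ZMod 2), ?_⟩
    rintro n ⟨C, hC, -⟩
    exact hC ▸ Finset.card_le_univ C
  have hfirst : (∑ p ∈ Finset.HasAntidiagonal.antidiagonal d,
      (2 * d - r % (2 * d)).choose p.1 * (r % (2 * d)).choose p.2 *
        (r / (2 * d)) ^ p.1 * (r / (2 * d) + 1) ^ p.2) ≤ beta r d := by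
    rw [← hcard]
    exact le_csSup hbdd hmem
  refine ⟨hfirst, le_trans ?_ hfirst⟩
  have hρ : r % (2*d) ≤ 2*d := le_of_lt (Nat.mod_lt _ (by omega))
  have hvdm : (2*d).choose d = ∑ p ∈ Finset.HasAntidiagonal.antidiagonal d,
      (2*d - r % (2*d)).choose p.1 * (r % (2*d)).choose p.2 := by
    conv_lhs => rw [show 2*d = (2*d - r % (2*d)) + (r % (2*d)) by omega]
    exact Nat.add_choose_eq _ _ d
  rw [hvdm, Finset.sum_mul]
  apply Finset.sum_le_sum
  intro p hp
  rw [Finset.HasAntidiagonal.mem_antidiagonal] at hp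
  have hterm : (2*d - r % (2*d)).choose p.1 * (r % (2*d)).choose p.2 * (r/(2*d))^d
      = (2*d - r % (2*d)).choose p.1 * (r % (2*d)).choose p.2
          * ((r/(2*d))^p.1 * (r/(2*d))^p.2) := by
    rw [← pow_add, hp]
  rw [hterm]
  have hple : (r/(2*d))^p.2 ≤ (r/(2*d)+1)^p.2 := Nat.pow_le_pow_left (by omega) _
  calc (2*d - r % (2*d)).choose p.1 * (r % (2*d)).choose p.2
          * ((r/(2*d))^p.1 * (r/(2*d))^p.2)
      ≤ (2*d - r % (2*d)).choose p.1 * (r % (2*d)).choose p.2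
          * ((r/(2*d))^p.1 * (r/(2*d)+1)^p.2) :=
        Nat.mul_le_mul_left _ (Nat.mul_le_mul_left _ hple)
    _ = (2*d - r % (2*d)).choose p.1 * (r % (2*d)).choose p.2
          * (r/(2*d))^p.1 * (r/(2*d)+1)^p.2 := by ring
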